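/- Let F, G : [t_st, t_end] × ℝⁿ → ℝⁿ be continuous. If for every continuous function y : [t_st, t_end] → ℝⁿ and every s ∈ [t_st, t_end] one has ∫_{t_st}^{s} F(τ, y(τ)) dτ = ∫_{t_st}^{s} G(τ, y(τ)) dτ, then F = G on [t_st, t_end] × ℝⁿ. In other words, the map sending a continuous right-hand side F to the transition functional f(s, y) := y(t_st) + ∫_{t_st}^{s} F(τ, y(τ)) dτ is injective. -/

import Mathlib

open Set


/-- If two continuous right-hand sides `F, G : [t_st, t_end] × ℝⁿ → ℝⁿ`
induce the same transition functional
`f(s, y) = y(t_st) + ∫_{t_st}^s F(τ, y(τ)) dτ` (over all continuous `y` and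
all `s ∈ [t_st, t_end]`), then `F = G` on `[t_st, t_end] × ℝⁿ`: the map
`F ↦ f` is injective. -/
theorem rhs_determined_by_transition (n : ℕ) (tst tend : ℝ) (h : tst < tend)
    (F G : ℝ → EuclideanSpace ℝ (Fin n) → EuclideanSpace ℝ (Fin n))
    (hF : ContinuousOn (Function.uncurry F)
      (Set.Icc tst tend ×ˢ (Set.univ : Set (EuclideanSpace ℝ (Fin n)))))
    (hG : ContinuousOn (Function.uncurry G)
      (Set.Icc tst tend ×ˢ (Set.univ : Set (EuclideanSpace ℝ (Fin n)))))
    (heq : ∀ y : ℝ → EuclideanSpace ℝ (Fin n), ContinuousOn y (Set.Icc tst tend) →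
      ∀ s ∈ Set.Icc tst tend,
        y tst + ∫ τ in tst..s, F τ (y τ) = y tst + ∫ τ in tst..s, G τ (y τ)) :
    ∀ t ∈ Set.Icc tst tend, ∀ v : EuclideanSpace ℝ (Fin n), F t v = G t v := by
  intro t ht v
  set f : ℝ → EuclideanSpace ℝ (Fin n) := fun τ => F τ v with hf_def
  set g : ℝ → EuclideanSpace ℝ (Fin n) := fun τ => G τ v with hg_def
  have hemb : ContinuousOn (fun τ : ℝ => (τ, v)) (Icc tst tend) :=
    (continuous_id.prodMk continuous_const).continuousOn
  have hmaps : MapsTo (fun τ : ℝ => (τ, v)) (Icc tst tend)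
      (Icc tst tend ×ˢ (univ : Set (EuclideanSpace ℝ (Fin n)))) :=
    fun τ hτ => ⟨hτ, mem_univ v⟩
  have hfc : ContinuousOn f (Icc tst tend) := hF.comp hemb hmaps
  have hgc : ContinuousOn g (Icc tst tend) := hG.comp hemb hmaps
  -- the integrals agree on [tst, tend]
  have hint : ∀ s ∈ Icc tst tend, (∫ τ in tst..s, f τ) = ∫ τ in tst..s, g τ := by
    intro s hs
    exact add_left_cancel (heq (fun _ => v) continuousOn_const s hs)
  have hfi : IntervalIntegrable f MeasureTheory.volume tst t :=
    (hfc.mono (by rw [uIcc_of_le ht.1]; exact Icc_subset_Icc le_rfl ht.2)).intervalIntegrable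
  have hgi : IntervalIntegrable g MeasureTheory.volume tst t :=
    (hgc.mono (by rw [uIcc_of_le ht.1]; exact Icc_subset_Icc le_rfl ht.2)).intervalIntegrable
  have hfm : StronglyMeasurableAtFilter f (nhdsWithin t (Icc tst tend)) :=
    hfc.stronglyMeasurableAtFilter_nhdsWithin measurableSet_Icc t
  have hgm : StronglyMeasurableAtFilter g (nhdsWithin t (Icc tst tend)) :=
    hgc.stronglyMeasurableAtFilter_nhdsWithin measurableSet_Icc t
  rcases lt_or_eq_of_le ht.2 with htl | hte
  · -- t < tend : differentiate from the right
    have hmemIcc : Icc tst tend ∈ nhdsWithin t (Ici t) :=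
      Icc_mem_nhdsGE_of_mem ⟨ht.1, htl⟩
    have hle : nhdsWithin t (Ici t) ≤ nhdsWithin t (Icc tst tend) := by
      rw [← nhdsWithin_Icc_eq_nhdsGE htl]
      exact nhdsWithin_mono t (Icc_subset_Icc ht.1 le_rfl)
    have hle' : nhdsWithin t (Ioi t) ≤ nhdsWithin t (Icc tst tend) :=
      (nhdsWithin_mono t Ioi_subset_Ici_self).trans hle
    have hmemIcc' : Icc tst tend ∈ nhdsWithin t (Ioi t) :=
      nhdsWithin_mono t Ioi_subset_Ici_self hmemIcc
    have hfct : ContinuousWithinAt f (Ioi t) t :=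
      (hfc t ht).mono_of_mem_nhdsWithin hmemIcc'
    have hgct : ContinuousWithinAt g (Ioi t) t :=
      (hgc t ht).mono_of_mem_nhdsWithin hmemIcc'
    have H1 : HasDerivWithinAt (fun u => ∫ τ in tst..u, f τ) (f t) (Ici t) t :=
      intervalIntegral.integral_hasDerivWithinAt_right hfi (hfm.filter_mono hle') hfct
    have H2 : HasDerivWithinAt (fun u => ∫ τ in tst..u, g τ) (g t) (Ici t) t :=
      intervalIntegral.integral_hasDerivWithinAt_right hgi (hgm.filter_mono hle') hgct
    have H2' : HasDerivWithinAt (fun u => ∫ τ in tst..u, f τ) (g t) (Ici t) t := by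
      refine H2.congr_of_eventuallyEq ?_ (hint t ht)
      filter_upwards [hmemIcc] with s hs using hint s hs
    exact (uniqueDiffOn_Ici t t self_mem_Ici).eq_deriv _ H1 H2'
  · -- t = tend : differentiate from the left
    have h't : tst < t := hte ▸ h
    have hmemIcc : Icc tst tend ∈ nhdsWithin t (Iic t) :=
      Icc_mem_nhdsLE_of_mem ⟨h't, ht.2⟩
    have hle : nhdsWithin t (Iic t) ≤ nhdsWithin t (Icc tst tend) := by
      rw [← nhdsWithin_Icc_eq_nhdsLE h't]
      exact nhdsWithin_mono t (Icc_subset_Icc le_rfl ht.2)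
    have hfct : ContinuousWithinAt f (Iic t) t :=
      (hfc t ht).mono_of_mem_nhdsWithin hmemIcc
    have hgct : ContinuousWithinAt g (Iic t) t :=
      (hgc t ht).mono_of_mem_nhdsWithin hmemIcc
    have H1 : HasDerivWithinAt (fun u => ∫ τ in tst..u, f τ) (f t) (Iic t) t :=
      intervalIntegral.integral_hasDerivWithinAt_right hfi (hfm.filter_mono hle) hfct
    have H2 : HasDerivWithinAt (fun u => ∫ τ in tst..u, g τ) (g t) (Iic t) t :=
      intervalIntegral.integral_hasDerivWithinAt_right hgi (hgm.filter_mono hle) hgct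
    have H2' : HasDerivWithinAt (fun u => ∫ τ in tst..u, f τ) (g t) (Iic t) t := by
      refine H2.congr_of_eventuallyEq ?_ (hint t ht)
      filter_upwards [hmemIcc] with s hs using hint s hs
    exact (uniqueDiffOn_Iic t t self_mem_Iic).eq_deriv _ H1 H2'
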